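/- Let E be a smooth 3×3-matrix-valued function on ℝ³ satisfying the compatibility condition ∂_k E^{ij} + E^{lk}∂_l E^{ij} = ∂_j E^{ik} + E^{lj}∂_l E^{ik} for all i,j,k. Then ∂_j∂_k E^{ik} - ∂_i∂_k E^{jk} = Δ(E^{ij} - E^{ji}) + ∂_k(E^{lk}∂_l E^{ij} - E^{lj}∂_l E^{ik}) - ∂_k(E^{lk}∂_l E^{ji} - E^{li}∂_l E^{jk}), where summation over repeated indices is understood. -/

import Mathlib

/-- The `i`-th partial derivative of `f : ℝ³ → ℝ` at `x`. -/
noncomputable def pd (i : Fin 3) (f : EuclideanSpace ℝ (Fin 3) → ℝ)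
    (x : EuclideanSpace ℝ (Fin 3)) : ℝ :=
  fderiv ℝ f x (EuclideanSpace.single i 1)

private lemma pd_contDiff {f : EuclideanSpace ℝ (Fin 3) → ℝ} (hf : ContDiff ℝ 2 f) (k : Fin 3) :
    ContDiff ℝ 1 (pd k f) := by
  unfold pd
  exact (ContinuousLinearMap.apply ℝ ℝ (EuclideanSpace.single k 1)).contDiff.comp
    (hf.fderiv_right (m := 1) (by norm_num))

private lemma pd_symm {f : EuclideanSpace ℝ (Fin 3) → ℝ} (hf : ContDiff ℝ 2 f) (j k : Fin 3)
    (x : EuclideanSpace ℝ (Fin 3)) :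
    pd j (fun y => pd k f y) x = pd k (fun y => pd j f y) x := by
  have hd : Differentiable ℝ (fderiv ℝ f) :=
    (hf.fderiv_right (m := 1) (by norm_num)).differentiable one_ne_zero
  have hs := hf.contDiffAt (x := x) |>.isSymmSndFDerivAt (by simp [minSmoothness_of_isRCLikeNormedField])
  have h : ∀ v w : EuclideanSpace ℝ (Fin 3),
      fderiv ℝ (fun y => fderiv ℝ f y v) x w = fderiv ℝ (fderiv ℝ f) x w v := by
    intro v w
    rw [fderiv_clm_apply (hd x) (differentiableAt_const v)]
    simp
  simp only [pd]
  rw [h, h, hs.eq]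

private lemma pd_add {f g : EuclideanSpace ℝ (Fin 3) → ℝ} {x} (hf : DifferentiableAt ℝ f x)
    (hg : DifferentiableAt ℝ g x) (k : Fin 3) :
    pd k (fun y => f y + g y) x = pd k f x + pd k g x := by
  simp only [pd]; rw [fderiv_fun_add hf hg]; simp

private lemma pd_sub {f g : EuclideanSpace ℝ (Fin 3) → ℝ} {x} (hf : DifferentiableAt ℝ f x)
    (hg : DifferentiableAt ℝ g x) (k : Fin 3) :
    pd k (fun y => f y - g y) x = pd k f x - pd k g x := by
  simp only [pd]; rw [fderiv_fun_sub hf hg]; simp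

theorem stmt_16 (E : EuclideanSpace ℝ (Fin 3) → Matrix (Fin 3) (Fin 3) ℝ)
    (hE : ∀ i j : Fin 3, ContDiff ℝ 2 (fun x => E x i j))
    (hcompat : ∀ x, ∀ i j k : Fin 3,
      pd k (fun y => E y i j) x + ∑ l, E x l k * pd l (fun y => E y i j) x
        = pd j (fun y => E y i k) x + ∑ l, E x l j * pd l (fun y => E y i k) x) :
    ∀ x, ∀ i j : Fin 3,
      (∑ k, pd j (fun y => pd k (fun z => E z i k) y) x)
          - (∑ k, pd i (fun y => pd k (fun z => E z j k) y) x)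
        = (∑ k, pd k (fun y => pd k (fun z => E z i j - E z j i) y) x)
          + (∑ k, pd k (fun y =>
              ∑ l, (E y l k * pd l (fun z => E z i j) y - E y l j * pd l (fun z => E z i k) y)) x)
          - (∑ k, pd k (fun y =>
              ∑ l, (E y l k * pd l (fun z => E z j i) y - E y l i * pd l (fun z => E z j k) y)) x) := by
  intro x i j
  -- basic differentiability facts
  have hEd : ∀ i j : Fin 3, Differentiable ℝ (fun y => E y i j) :=
    fun i j => (hE i j).differentiable (by norm_num)
  have hpd1 : ∀ (k i j : Fin 3), Differentiable ℝ (pd k (fun y => E y i j)) :=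
    fun k i j => (pd_contDiff (hE i j) k).differentiable one_ne_zero
  -- Q-term differentiability
  have hQd : ∀ (i j k : Fin 3) (y : EuclideanSpace ℝ (Fin 3)), DifferentiableAt ℝ
      (fun y => ∑ l, (E y l k * pd l (fun z => E z i j) y - E y l j * pd l (fun z => E z i k) y)) y := by
    intro i j k y
    apply DifferentiableAt.fun_sum
    intro l _
    exact ((hEd l k y).mul ((hpd1 l i j) y)).sub ((hEd l j y).mul ((hpd1 l i k) y))
  -- key pointwise identity from compatibility
  have key : ∀ (i j k : Fin 3) (y : EuclideanSpace ℝ (Fin 3)),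
      pd j (fun z => E z i k) y = pd k (fun z => E z i j) y
        + ∑ l, (E y l k * pd l (fun z => E z i j) y - E y l j * pd l (fun z => E z i k) y) := by
    intro i j k y
    have h := hcompat y i j k
    rw [Finset.sum_sub_distrib]
    linarith
  -- step: swap and substitute
  have step : ∀ (i j k : Fin 3),
      pd j (fun y => pd k (fun z => E z i k) y) x
        = pd k (pd k (fun z => E z i j)) x
          + pd k (fun y =>
              ∑ l, (E y l k * pd l (fun z => E z i j) y - E y l j * pd l (fun z => E z i k) y)) x := by
    intro i j k
    rw [pd_symm (hE i k) j k x]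
    have : (fun y => pd j (fun z => E z i k) y)
        = fun y => pd k (fun z => E z i j) y
          + ∑ l, (E y l k * pd l (fun z => E z i j) y - E y l j * pd l (fun z => E z i k) y) :=
      funext (key i j k)
    rw [this, pd_add ((hpd1 k i j) x) (hQd i j k x) k]
  -- inner difference splits
  have hdiff : ∀ k : Fin 3,
      pd k (fun y => pd k (fun z => E z i j - E z j i) y) x
        = pd k (pd k (fun z => E z i j)) x - pd k (pd k (fun z => E z j i)) x := by
    intro k
    have : (fun y => pd k (fun z => E z i j - E z j i) y)
        = fun y => pd k (fun z => E z i j) y - pd k (fun z => E z j i) y :=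
      funext fun y => pd_sub (hEd i j y) (hEd j i y) k
    rw [this, pd_sub ((hpd1 k i j) x) ((hpd1 k j i) x) k]
  simp only [step, hdiff, Finset.sum_add_distrib, Finset.sum_sub_distrib]
  ring
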